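/- Let f: ℝ^n → ℝ be L-smooth and γ-weakly-quasi-convex with minimizer x*, γ ∈ (0,1]. Suppose sequences (x^k), (y^k), weights (a_k), (A_k) with A_k = Σ_{i=1}^k a_i and estimating functions ψ_k(x) = (1/2)‖x − x^0‖₂² + Σ_{i=0}^{k−1} a_{i+1}(f(y^i) + ⟨∇f(y^i), x − y^i⟩) are generated by Algorithm AGMsDR, so that A_k f(x^k) ≤ min_x ψ_k(x) and f(y^i) ≤ f(x^i) ≤ f(x^0) for all i. Then for every k: A_k (f(x^k) − f(x*)) ≤ (1 − γ) A_k (f(x^0) − f(x*)) + (1/2)‖x* − x^0‖₂². -/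
import Mathlib

open scoped RealInnerProductSpace

/-- (Lemma 1 of the paper.) For an `L`-smooth, `γ`-weakly-quasi-convex `f`
with minimizer `x*`, the AGMsDR estimating-sequence guarantee
`A k * f (x k) ≤ min_x ψ k x` with `f (y i) ≤ f (x i) ≤ f (x 0)` implies
`A k (f (x k) - f x*) ≤ (1 - γ) A k (f (x 0) - f x*) + (1/2)‖x* - x 0‖²`. -/
theorem stmt_4 (n : ℕ) (L γ : ℝ) (hL : 0 < L) (hγ : γ ∈ Set.Ioc (0 : ℝ) 1)
    (f : EuclideanSpace ℝ (Fin n) → ℝ)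
    (g : EuclideanSpace ℝ (Fin n) → EuclideanSpace ℝ (Fin n))
    (hdiff : ∀ z, HasGradientAt f (g z) z)
    (hlip : ∀ z w, ‖g z - g w‖ ≤ L * ‖z - w‖)
    (xstar : EuclideanSpace ℝ (Fin n)) (hstar : ∀ z, f xstar ≤ f z)
    (hwqc : ∀ z, γ * (f z - f xstar) ≤ ⟪g z, z - xstar⟫)
    (x y : ℕ → EuclideanSpace ℝ (Fin n)) (a A : ℕ → ℝ)
    (hapos : ∀ i, 0 < a (i + 1))
    (hA : ∀ k, A k = ∑ i ∈ Finset.range k, a (i + 1))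
    (hψ : ∀ k (z : EuclideanSpace ℝ (Fin n)), A k * f (x k) ≤
      (1 / 2) * ‖z - x 0‖ ^ 2 +
        ∑ i ∈ Finset.range k, a (i + 1) * (f (y i) + ⟪g (y i), z - y i⟫))
    (hyx : ∀ i, f (y i) ≤ f (x i)) (hx0 : ∀ i, f (x i) ≤ f (x 0)) :
    ∀ k, A k * (f (x k) - f xstar) ≤
      (1 - γ) * A k * (f (x 0) - f xstar) + (1 / 2) * ‖xstar - x 0‖ ^ 2 := by
  intro k
  have key := hψ k xstar
  have hterm : ∀ i ∈ Finset.range k,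
      a (i + 1) * (f (y i) + ⟪g (y i), xstar - y i⟫) ≤
      a (i + 1) * ((1 - γ) * f (x 0) + γ * f xstar) := by
    intro i _
    apply mul_le_mul_of_nonneg_left _ (hapos i).le
    have h2 : ⟪g (y i), xstar - y i⟫ = -⟪g (y i), y i - xstar⟫ := by
      rw [← neg_sub, inner_neg_right]
    have h1 := hwqc (y i)
    have h3 : f (y i) ≤ f (x 0) := (hyx i).trans (hx0 i)
    have h4 : (1 - γ) * f (y i) ≤ (1 - γ) * f (x 0) :=
      mul_le_mul_of_nonneg_left h3 (by linarith [hγ.2])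
    rw [h2]
    nlinarith
  have hsum := Finset.sum_le_sum hterm
  rw [← Finset.sum_mul] at hsum
  rw [← hA k] at hsum
  linarith [key, hsum]
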